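/- The simplex S_d = conv{−𝟙, e₁, …, e_d} ⊂ ℝ^d (where 𝟙 is the all-ones vector) has lattice width 2 with respect to ℤ^d, realized by the standard basis directions, and is lattice reduced with respect to ℤ^d. -/

import Mathlib

open scoped Pointwise

noncomputable section

/-- Standard dot product on `Fin d → ℝ`. -/
def dot {d : ℕ} (x y : Fin d → ℝ) : ℝ := ∑ i, x i * y i

/-- A convex body: convex, compact, with nonempty interior. -/
def IsConvexBody {d : ℕ} (C : Set (Fin d → ℝ)) : Prop :=
  Convex ℝ C ∧ IsCompact C ∧ (interior C).Nonempty

/-- A full-dimensional lattice: the integer span of a basis of `ℝ^d`. -/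
def IsLattice {d : ℕ} (L : Set (Fin d → ℝ)) : Prop :=
  ∃ B : Module.Basis (Fin d) ℝ (Fin d → ℝ),
    L = Set.range (fun z : Fin d → ℤ => ∑ i, (z i : ℝ) • B i)

/-- The dual lattice: vectors pairing integrally with all lattice vectors. -/
def dualLattice {d : ℕ} (L : Set (Fin d → ℝ)) : Set (Fin d → ℝ) :=
  {y | ∀ x ∈ L, ∃ n : ℤ, dot x y = (n : ℝ)}

/-- Width of `C` in direction `y`: `sup_{a,b ∈ C} y·(a-b)`. -/
def widthDir {d : ℕ} (C : Set (Fin d → ℝ)) (y : Fin d → ℝ) : ℝ :=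
  sSup {r | ∃ a ∈ C, ∃ b ∈ C, r = dot y (a - b)}

/-- Lattice width of `C` with respect to a lattice `L`. -/
def latticeWidth {d : ℕ} (C L : Set (Fin d → ℝ)) : ℝ :=
  sInf {w | ∃ y ∈ dualLattice L, y ≠ 0 ∧ w = widthDir C y}

/-- A primitive lattice vector: a nonzero lattice vector such that no proper
fraction of it is a lattice vector. -/
def IsPrimitiveVec {d : ℕ} (L : Set (Fin d → ℝ)) (v : Fin d → ℝ) : Prop :=
  v ∈ L ∧ v ≠ 0 ∧ ∀ t : ℝ, 0 < t → t < 1 → t • v ∉ L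

/-- Lattice diameter of `C` w.r.t. `L`: the supremum of lattice lengths of
lattice segments contained in `C`, a segment of lattice length `t` being one of
the form `[a, a + t • v]` with `v` primitive in `L`. -/
def latticeDiam {d : ℕ} (C L : Set (Fin d → ℝ)) : ℝ :=
  sSup {t : ℝ | 0 ≤ t ∧ ∃ a v, IsPrimitiveVec L v ∧ segment ℝ a (a + t • v) ⊆ C}

/-- The polar body `K* = {y : x·y ≤ 1 ∀ x ∈ K}`. -/
def polarBody {d : ℕ} (K : Set (Fin d → ℝ)) : Set (Fin d → ℝ) :=
  {y | ∀ x ∈ K, dot x y ≤ 1}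

/-- First successive minimum of `K` w.r.t. the lattice `L`. -/
def lambda1 {d : ℕ} (K L : Set (Fin d → ℝ)) : ℝ :=
  sInf {r : ℝ | 0 ≤ r ∧ ∃ x ∈ L, x ≠ 0 ∧ x ∈ r • K}

/-- The difference body `C - C`. -/
def diffBody {d : ℕ} (C : Set (Fin d → ℝ)) : Set (Fin d → ℝ) := C - C

/-- `C` is lattice reduced w.r.t. `L`: it is a convex body and no convex body
properly contained in it has the same lattice width. -/
def IsLatticeReduced {d : ℕ} (C L : Set (Fin d → ℝ)) : Prop :=
  IsConvexBody C ∧ ∀ C', IsConvexBody C' → C' ⊂ C → latticeWidth C' L ≠ latticeWidth C L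

/-- `C` is lattice complete w.r.t. `L`: it is a convex body and no convex body
properly containing it has the same lattice diameter. -/
def IsLatticeComplete {d : ℕ} (C L : Set (Fin d → ℝ)) : Prop :=
  IsConvexBody C ∧ ∀ C', IsConvexBody C' → C ⊂ C' → latticeDiam C' L ≠ latticeDiam C L

/-- A width direction of `C`: a nonzero dual lattice vector realizing the
lattice width. -/
def IsWidthDirection {d : ℕ} (C L : Set (Fin d → ℝ)) (y : Fin d → ℝ) : Prop :=
  y ∈ dualLattice L ∧ y ≠ 0 ∧ widthDir C y = latticeWidth C L

/-- A diameter direction of `C`: a primitive lattice vector parallel to a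
lattice segment in `C` of maximal lattice length. -/
def IsDiameterDirection {d : ℕ} (C L : Set (Fin d → ℝ)) (v : Fin d → ℝ) : Prop :=
  IsPrimitiveVec L v ∧ ∃ a, segment ℝ a (a + latticeDiam C L • v) ⊆ C

/-- A diameter segment of `C`: a lattice segment contained in `C` whose lattice
length equals the lattice diameter of `C`. -/
def IsDiameterSegment {d : ℕ} (C L : Set (Fin d → ℝ)) (a b : Fin d → ℝ) : Prop :=
  segment ℝ a b ⊆ C ∧ ∃ v, IsPrimitiveVec L v ∧ b = a + latticeDiam C L • v

/-- A polytope: the convex hull of finitely many points. -/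
def IsPolytope {d : ℕ} (C : Set (Fin d → ℝ)) : Prop :=
  ∃ V : Finset (Fin d → ℝ), C = convexHull ℝ (V : Set (Fin d → ℝ))

/-- A facet of a `d`-dimensional body: a face (extreme subset) of dimension `d-1`. -/
def IsFacetOf {d : ℕ} (P F : Set (Fin d → ℝ)) : Prop :=
  IsExtreme ℝ P F ∧ Module.finrank ℝ (vectorSpan ℝ F) + 1 = d

/-- The integer lattice `ℤ^d` inside `Fin d → ℝ`. -/
def intLattice (d : ℕ) : Set (Fin d → ℝ) := {x | ∀ i, ∃ n : ℤ, x i = (n : ℝ)}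

/-- The simplex `S_d = conv{-𝟙, e₁, …, e_d}`. -/
def simplexS (d : ℕ) : Set (Fin d → ℝ) :=
  convexHull ℝ (insert (fun _ : Fin d => (-1 : ℝ))
    (Set.range (fun i : Fin d => (Pi.single i (1 : ℝ) : Fin d → ℝ))))

-- H-description set
def Tset (d : ℕ) : Set (Fin d → ℝ) :=
  {x | (∑ j, x j) ≤ 1 ∧ ∀ i, (∑ j, x j) - 1 ≤ ((d : ℝ) + 1) * x i}

lemma convex_Tset (d : ℕ) : Convex ℝ (Tset d) := by
  intro x hx y hy a b ha hb hab
  obtain ⟨hx1, hx2⟩ := hx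
  obtain ⟨hy1, hy2⟩ := hy
  have hsum : (∑ j, (a • x + b • y) j) = a * (∑ j, x j) + b * (∑ j, y j) := by
    simp [Finset.mul_sum, Finset.sum_add_distrib]
  constructor
  · rw [hsum]; nlinarith
  · intro i
    rw [hsum]
    have h1 := mul_le_mul_of_nonneg_left (hx2 i) ha
    have h2 := mul_le_mul_of_nonneg_left (hy2 i) hb
    have : (a • x + b • y) i = a * x i + b * y i := by simp
    rw [this]; nlinarith

lemma mem_simplexS_iff {d : ℕ} (x : Fin d → ℝ) :
    x ∈ simplexS d ↔ x ∈ Tset d := by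
  constructor
  · intro hx
    refine convexHull_min ?_ (convex_Tset d) hx
    rintro v (rfl | ⟨i, rfl⟩)
    · constructor
      · simp only [Finset.sum_const, Finset.card_univ, Fintype.card_fin, nsmul_eq_mul,
          mul_neg_one]
        have : (0:ℝ) ≤ (d:ℝ) := Nat.cast_nonneg d
        linarith
      · intro i
        simp only [Finset.sum_const, Finset.card_univ, Fintype.card_fin, nsmul_eq_mul,
          mul_neg_one, mul_neg, mul_one]
        push_cast
        linarith
    · constructor
      · simp
      · intro j
        simp [Pi.single_apply]
        by_cases h : j = i <;> simp [h] <;> positivity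
  · rintro ⟨h1, h2⟩
    set l0 : ℝ := (1 - ∑ j, x j) / ((d : ℝ) + 1) with hl0
    have hd1 : (0 : ℝ) < (d : ℝ) + 1 := by positivity
    have hl0nn : 0 ≤ l0 := by
      apply div_nonneg _ hd1.le; linarith
    have key : ∀ i, 0 ≤ x i + l0 := by
      intro i
      have := h2 i
      have : 0 ≤ ((d:ℝ)+1) * x i + (1 - ∑ j, x j) := by linarith
      have h' : 0 ≤ (((d:ℝ)+1) * x i + (1 - ∑ j, x j)) / ((d:ℝ)+1) :=
        div_nonneg this hd1.le
      calc (0:ℝ) ≤ (((d:ℝ)+1) * x i + (1 - ∑ j, x j)) / ((d:ℝ)+1) := h'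
        _ = x i + l0 := by rw [hl0]; field_simp
    -- weights over Option (Fin d)
    have := (convex_convexHull ℝ (insert (fun _ : Fin d => (-1 : ℝ))
      (Set.range (fun i : Fin d => (Pi.single i (1 : ℝ) : Fin d → ℝ))))).sum_mem
      (t := (Finset.univ : Finset (Option (Fin d))))
      (w := fun o => Option.elim o l0 (fun i => x i + l0))
      (z := fun o => Option.elim o (fun _ : Fin d => (-1:ℝ)) (fun i => Pi.single i (1:ℝ)))
      ?_ ?_ ?_
    · unfold simplexS; convert this using 1
      funext j
      rw [Fintype.sum_option]
      simp only [Option.elim, Pi.add_apply, Pi.smul_apply, smul_eq_mul]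
      rw [Finset.sum_apply]
      have : ∀ i : Fin d, ((x i + l0) • (Pi.single i (1:ℝ) : Fin d → ℝ)) j
          = if j = i then x i + l0 else 0 := by
        intro i
        simp [Pi.single_apply]
      rw [Finset.sum_congr rfl (fun i _ => this i), Finset.sum_ite_eq]
      simp only [Finset.mem_univ, if_true]
      ring
    · rintro (_|i) _
      · exact hl0nn
      · exact key i
    · rw [Fintype.sum_option]
      simp only [Option.elim]
      rw [Finset.sum_add_distrib]
      simp only [Finset.sum_const, Finset.card_univ, Fintype.card_fin, nsmul_eq_mul]
      rw [hl0]
      field_simp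
      ring
    · rintro (_|i) _
      · exact subset_convexHull ℝ _ (Set.mem_insert _ _)
      · exact subset_convexHull ℝ _ (Set.mem_insert_of_mem _ ⟨i, rfl⟩)

lemma dot_single {d : ℕ} (i : Fin d) (x : Fin d → ℝ) :
    dot (Pi.single i (1:ℝ)) x = x i := by
  unfold dot
  have : ∀ k : Fin d, (Pi.single i (1:ℝ) : Fin d → ℝ) k * x k = if i = k then x k else 0 := by
    intro k
    rcases eq_or_ne i k with rfl | h
    · simp
    · simp [Pi.single_apply, Ne.symm h, h]
  rw [Finset.sum_congr rfl (fun k _ => this k), Finset.sum_ite_eq]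
  simp

lemma single_mem_intLattice {d : ℕ} (i : Fin d) :
    (Pi.single i (1:ℝ)) ∈ intLattice d := by
  intro k
  rcases eq_or_ne k i with rfl | h
  · exact ⟨1, by simp⟩
  · exact ⟨0, by simp [Pi.single_eq_of_ne h]⟩

lemma dual_intLattice (d : ℕ) : dualLattice (intLattice d) = intLattice d := by
  ext y
  constructor
  · intro hy i
    obtain ⟨n, hn⟩ := hy (Pi.single i (1:ℝ)) (single_mem_intLattice i)
    exact ⟨n, by rw [← hn, dot_single]⟩
  · intro hy x hx
    choose nx hnx using hx
    choose ny hny using hy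
    refine ⟨∑ k, nx k * ny k, ?_⟩
    unfold dot
    push_cast
    exact Finset.sum_congr rfl fun k _ => by rw [hnx k, hny k]

-- coordinate bounds on the simplex
lemma simplexS_coord_bounds {d : ℕ} {x : Fin d → ℝ} (hx : x ∈ simplexS d) (i : Fin d) :
    -1 ≤ x i ∧ x i ≤ 1 := by
  have hlin : IsLinearMap ℝ (fun z : Fin d → ℝ => z i) := ⟨fun a b => rfl, fun c z => rfl⟩
  have hconv : Convex ℝ {z : Fin d → ℝ | -1 ≤ z i ∧ z i ≤ 1} := by
    exact (convex_halfSpace_ge hlin (-1)).inter (convex_halfSpace_le hlin 1)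
  refine convexHull_min ?_ hconv hx
  rintro v (rfl | ⟨j, rfl⟩)
  · constructor <;> norm_num
  · rcases eq_or_ne i j with rfl | h
    · constructor <;> simp
    · constructor <;> simp [Pi.single_apply, h]

lemma neg_one_mem_simplexS {d : ℕ} : (fun _ : Fin d => (-1:ℝ)) ∈ simplexS d :=
  subset_convexHull ℝ _ (Set.mem_insert _ _)

lemma single_mem_simplexS {d : ℕ} (i : Fin d) : (Pi.single i (1:ℝ) : Fin d → ℝ) ∈ simplexS d :=
  subset_convexHull ℝ _ (Set.mem_insert_of_mem _ ⟨i, rfl⟩)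

-- uniqueness of maximizers
lemma eq_single_of_coord_one {d : ℕ} {x : Fin d → ℝ} (hx : x ∈ simplexS d) (i : Fin d)
    (hxi : x i = 1) : x = Pi.single i (1:ℝ) := by
  obtain ⟨h1, h2⟩ := (mem_simplexS_iff x).1 hx
  -- T := ∑_{j ≠ i} x j ≤ 0 and each x j ≥ T/(d+1)... show all x j = 0 for j ≠ i
  have hsum : (∑ j, x j) = 1 + ∑ j ∈ Finset.univ.erase i, x j := by
    rw [← hxi, ← Finset.add_sum_erase _ _ (Finset.mem_univ i)]
  set T := ∑ j ∈ Finset.univ.erase i, x j with hT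
  have hT0 : T ≤ 0 := by rw [hsum] at h1; linarith
  have hlow : ∀ j, T ≤ ((d:ℝ)+1) * x j := by
    intro j; have := h2 j; rw [hsum] at this; linarith
  have hTsum : ((d:ℝ)+1) * T = ∑ j ∈ Finset.univ.erase i, ((d:ℝ)+1) * x j := by
    rw [hT, Finset.mul_sum]
  have hcard : (Finset.univ.erase i).card = d - 1 := by
    rw [Finset.card_erase_of_mem (Finset.mem_univ i), Finset.card_univ, Fintype.card_fin]
  have hd1 : 1 ≤ d := Fin.pos i
  have hge : ((d:ℝ) - 1) * T ≤ ((d:ℝ)+1) * T := by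
    calc ((d:ℝ) - 1) * T = ∑ _j ∈ Finset.univ.erase i, T := by
          rw [Finset.sum_const, hcard, nsmul_eq_mul]
          congr 1
          push_cast [hd1]
          ring
      _ ≤ ∑ j ∈ Finset.univ.erase i, ((d:ℝ)+1) * x j :=
          Finset.sum_le_sum fun j _ => hlow j
      _ = ((d:ℝ)+1) * T := hTsum.symm
  have hTz : T = 0 := by nlinarith
  have hnn : ∀ j ∈ Finset.univ.erase i, 0 ≤ x j := by
    intro j _
    have := hlow j
    rw [hTz] at this
    nlinarith [Nat.cast_nonneg (α := ℝ) d]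
  have hall : ∀ j ∈ Finset.univ.erase i, x j = 0 := by
    intro j hj
    have := (Finset.sum_eq_zero_iff_of_nonneg hnn).1 (by rw [← hT, hTz]) j hj
    exact this
  funext j
  rcases eq_or_ne j i with rfl | h
  · simp [hxi]
  · rw [hall j (Finset.mem_erase.2 ⟨h, Finset.mem_univ j⟩), Pi.single_apply, if_neg h]

lemma eq_negOne_of_coord_negOne {d : ℕ} {x : Fin d → ℝ} (hx : x ∈ simplexS d) (i : Fin d)
    (hxi : x i = -1) : x = fun _ => (-1:ℝ) := by
  obtain ⟨h1, h2⟩ := (mem_simplexS_iff x).1 hx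
  have hsi := h2 i
  rw [hxi] at hsi
  have hsum_le : (∑ j, x j) ≤ -(d:ℝ) := by linarith
  have hlb : ∀ j, -1 ≤ x j := fun j => (simplexS_coord_bounds hx j).1
  have hsum_ge : -(d:ℝ) ≤ ∑ j, x j := by
    calc -(d:ℝ) = ∑ _j : Fin d, (-1:ℝ) := by simp
      _ ≤ ∑ j, x j := Finset.sum_le_sum fun j _ => hlb j
  have heq : (∑ j, x j) = ∑ _j : Fin d, (-1:ℝ) := by simp; linarith
  have hall : ∀ j, x j = -1 := by
    intro j
    by_contra hne
    have hlt : -1 < x j := lt_of_le_of_ne (hlb j) (Ne.symm hne)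
    have hstrict : (∑ _j : Fin d, (-1:ℝ)) < ∑ j, x j :=
      Finset.sum_lt_sum (fun k _ => hlb k) ⟨j, Finset.mem_univ j, hlt⟩
    rw [heq] at hstrict
    exact lt_irrefl _ hstrict
  funext j
  exact hall j

lemma width_set_bddAbove {d : ℕ} {C : Set (Fin d → ℝ)} (hC : C ⊆ simplexS d)
    (y : Fin d → ℝ) : BddAbove {r | ∃ a ∈ C, ∃ b ∈ C, r = dot y (a - b)} := by
  refine ⟨∑ k, |y k| * 2, ?_⟩
  rintro r ⟨a, ha, b, hb, rfl⟩
  unfold dot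
  apply Finset.sum_le_sum
  intro k _
  have hak := simplexS_coord_bounds (hC ha) k
  have hbk := simplexS_coord_bounds (hC hb) k
  have habs : |a k - b k| ≤ 2 := by
    rw [abs_le]
    constructor <;> [skip; skip] <;> simp [Pi.sub_apply] <;> linarith [hak.1, hak.2, hbk.1, hbk.2]
  calc y k * (a - b) k ≤ |y k * (a - b) k| := le_abs_self _
    _ = |y k| * |a k - b k| := by rw [abs_mul]; rfl
    _ ≤ |y k| * 2 := mul_le_mul_of_nonneg_left habs (abs_nonneg _)

lemma width_set_nonempty {d : ℕ} {C : Set (Fin d → ℝ)} (hC : C.Nonempty)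
    (y : Fin d → ℝ) : {r | ∃ a ∈ C, ∃ b ∈ C, r = dot y (a - b)}.Nonempty := by
  obtain ⟨a, ha⟩ := hC
  exact ⟨0, a, ha, a, ha, by simp [dot]⟩

lemma widthDir_nonneg {d : ℕ} {C : Set (Fin d → ℝ)} (hC : C.Nonempty)
    (hCS : C ⊆ simplexS d) (y : Fin d → ℝ) : 0 ≤ widthDir C y := by
  obtain ⟨a, ha⟩ := hC
  exact le_csSup (width_set_bddAbove hCS y) ⟨a, ha, a, ha, by simp [dot]⟩

-- the key integer lemma
lemma key_int {d : ℕ} (hd : 0 < d) (m : Fin d → ℤ) (hm : m ≠ 0) :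
    (∃ i j, 2 ≤ m i - m j) ∨ (∃ i, 2 ≤ m i + ∑ k, m k) ∨ (∃ i, 2 ≤ -(∑ k, m k) - m i) := by
  by_contra h
  push_neg at h
  obtain ⟨h3, h1, h2⟩ := h
  set s := ∑ k, m k with hs
  have h1' : ∀ i, m i + s ≤ 1 := fun i => by have := h1 i; omega
  have h2' : ∀ i, -s - m i ≤ 1 := fun i => by have := h2 i; omega
  have h3' : ∀ i j, m i - m j ≤ 1 := fun i j => by have := h3 i j; omega
  have hsum1 : s + (d:ℤ) * s ≤ d := by
    have := Finset.sum_le_sum (fun i (_ : i ∈ Finset.univ) => h1' i)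
    simpa [Finset.sum_add_distrib, ← hs, mul_comm] using this
  have hsum2 : -s - (d:ℤ) * s ≤ d := by
    have := Finset.sum_le_sum (fun i (_ : i ∈ Finset.univ) => h2' i)
    simp [Finset.sum_sub_distrib, ← hs] at this
    linarith
  have hs0 : s = 0 := by
    rcases lt_trichotomy s 0 with h | h | h
    · nlinarith
    · exact h
    · nlinarith
  -- now m sums to zero and is nonzero: get positive and negative entries
  have hmne : ∃ i, m i ≠ 0 := by
    by_contra hc
    push_neg at hc
    exact hm (funext fun i => hc i)
  obtain ⟨i0, hi0⟩ := hmne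
  have hpos : ∃ i, 1 ≤ m i := by
    by_contra hc
    push_neg at hc
    have hnp : ∀ i ∈ Finset.univ, m i ≤ 0 := fun i _ => by have := hc i; omega
    have := (Finset.sum_eq_zero_iff_of_nonpos hnp).1 (by rw [← hs, hs0])
    exact hi0 (this i0 (Finset.mem_univ i0))
  have hneg : ∃ i, m i ≤ -1 := by
    by_contra hc
    push_neg at hc
    have hnp : ∀ i ∈ Finset.univ, 0 ≤ m i := fun i _ => by have := hc i; omega
    have := (Finset.sum_eq_zero_iff_of_nonneg hnp).1 (by rw [← hs, hs0])
    exact hi0 (this i0 (Finset.mem_univ i0))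
  obtain ⟨i, hi⟩ := hpos
  obtain ⟨j, hj⟩ := hneg
  have := h3' i j
  omega

lemma sum_mul_single {d : ℕ} (y : Fin d → ℝ) (i : Fin d) :
    ∑ k, y k * (Pi.single i (1:ℝ) : Fin d → ℝ) k = y i := by
  have : ∀ k : Fin d, y k * (Pi.single i (1:ℝ) : Fin d → ℝ) k = if i = k then y k else 0 := by
    intro k
    rcases eq_or_ne i k with rfl | h
    · simp
    · simp [Pi.single_eq_of_ne (Ne.symm h), h]
  rw [Finset.sum_congr rfl (fun k _ => this k), Finset.sum_ite_eq]
  simp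

lemma single_ne_zero' {d : ℕ} (i : Fin d) : (Pi.single i (1:ℝ) : Fin d → ℝ) ≠ 0 := by
  intro h
  have := congrFun h i
  simp at this

lemma widthDir_simplex_ge_two {d : ℕ} (hd : 0 < d) {y : Fin d → ℝ}
    (hy : y ∈ intLattice d) (hy0 : y ≠ 0) : 2 ≤ widthDir (simplexS d) y := by
  choose m hm using hy
  have hm0 : m ≠ 0 := by
    intro h
    apply hy0
    funext i
    rw [hm i, h]; simp
  have hsum : (∑ k, y k) = ((∑ k, m k : ℤ) : ℝ) := by
    push_cast
    exact Finset.sum_congr rfl fun k _ => hm k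
  have hbdd := width_set_bddAbove (le_refl (simplexS d)) y
  rcases key_int hd m hm0 with ⟨i, j, hij⟩ | ⟨i, hi⟩ | ⟨i, hi⟩
  · refine le_csSup_of_le hbdd
      ⟨_, single_mem_simplexS i, _, single_mem_simplexS j, rfl⟩ ?_
    have : dot y (Pi.single i (1:ℝ) - Pi.single j (1:ℝ)) = y i - y j := by
      unfold dot
      simp only [Pi.sub_apply, mul_sub]
      rw [Finset.sum_sub_distrib, sum_mul_single, sum_mul_single]
    rw [this, hm i, hm j]
    exact_mod_cast hij
  · refine le_csSup_of_le hbdd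
      ⟨_, single_mem_simplexS i, _, neg_one_mem_simplexS, rfl⟩ ?_
    have : dot y (Pi.single i (1:ℝ) - fun _ => (-1:ℝ)) = y i + ∑ k, y k := by
      unfold dot
      simp only [Pi.sub_apply, mul_sub, mul_neg_one, sub_neg_eq_add, mul_add, mul_one]
      rw [Finset.sum_add_distrib, sum_mul_single]
    rw [this, hm i, hsum]
    exact_mod_cast hi
  · refine le_csSup_of_le hbdd
      ⟨_, neg_one_mem_simplexS, _, single_mem_simplexS i, rfl⟩ ?_
    have : dot y ((fun _ => (-1:ℝ)) - Pi.single i (1:ℝ)) = -(∑ k, y k) - y i := by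
      unfold dot
      simp only [Pi.sub_apply, mul_sub, mul_neg_one]
      rw [Finset.sum_sub_distrib, sum_mul_single]
      simp [Finset.sum_neg_distrib]
    rw [this, hm i, hsum]
    exact_mod_cast hi

lemma widthDir_single_simplex {d : ℕ} (hd : 0 < d) (i : Fin d) :
    widthDir (simplexS d) (Pi.single i (1:ℝ)) = 2 := by
  apply le_antisymm
  · apply csSup_le (width_set_nonempty ⟨_, neg_one_mem_simplexS⟩ _)
    rintro r ⟨a, ha, b, hb, rfl⟩
    rw [dot_single]
    have h1 := simplexS_coord_bounds ha i
    have h2 := simplexS_coord_bounds hb i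
    simp only [Pi.sub_apply]
    linarith [h1.2, h2.1]
  · exact widthDir_simplex_ge_two hd (single_mem_intLattice i) (single_ne_zero' i)

lemma latticeWidth_set_eq (d : ℕ) :
    {w | ∃ y ∈ dualLattice (intLattice d), y ≠ 0 ∧ w = widthDir (simplexS d) y}
      = {w | ∃ y ∈ intLattice d, y ≠ 0 ∧ w = widthDir (simplexS d) y} := by
  rw [dual_intLattice]

lemma latticeWidth_simplex (d : ℕ) (hd : 0 < d) :
    latticeWidth (simplexS d) (intLattice d) = 2 := by
  unfold latticeWidth
  rw [show {w | ∃ y ∈ dualLattice (intLattice d), y ≠ 0 ∧ w = widthDir (simplexS d) y}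
      = {w | ∃ y ∈ intLattice d, y ≠ 0 ∧ w = widthDir (simplexS d) y} by
    rw [dual_intLattice]]
  apply le_antisymm
  · apply csInf_le
    · exact ⟨2, fun w ⟨y, hy, hy0, hw⟩ => hw ▸ widthDir_simplex_ge_two hd hy hy0⟩
    · exact ⟨Pi.single ⟨0, hd⟩ (1:ℝ), single_mem_intLattice _, single_ne_zero' _,
        (widthDir_single_simplex hd _).symm⟩
  · apply le_csInf
    · exact ⟨2, Pi.single ⟨0, hd⟩ (1:ℝ), single_mem_intLattice _, single_ne_zero' _,
        (widthDir_single_simplex hd _).symm⟩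
    · rintro w ⟨y, hy, hy0, rfl⟩
      exact widthDir_simplex_ge_two hd hy hy0

lemma isCompact_simplexS (d : ℕ) : IsCompact (simplexS d) := by
  apply Set.Finite.isCompact_convexHull
  exact (Set.finite_range _).insert _

lemma interior_simplexS_nonempty {d : ℕ} (hd : 0 < d) : (interior (simplexS d)).Nonempty := by
  set r : ℝ := 1 / (2 * (d:ℝ) + 2) with hr
  have hrpos : 0 < r := by rw [hr]; positivity
  have hball : Metric.ball (0 : Fin d → ℝ) r ⊆ simplexS d := by
    intro x hx
    rw [mem_ball_zero_iff] at hx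
    have hxi : ∀ i, |x i| < r := fun i =>
      lt_of_le_of_lt (by rw [← Real.norm_eq_abs]; exact norm_le_pi_norm x i) hx
    rw [mem_simplexS_iff]
    have hsum_ub : (∑ j, x j) ≤ (d:ℝ) * r := by
      calc (∑ j, x j) ≤ ∑ _j : Fin d, r :=
            Finset.sum_le_sum fun j _ => le_of_lt (lt_of_le_of_lt (le_abs_self _) (hxi j))
        _ = (d:ℝ) * r := by simp [mul_comm]
    constructor
    · have h2d : (0:ℝ) < 2*(d:ℝ)+2 := by positivity
      have hd0 : (0:ℝ) ≤ (d:ℝ) := Nat.cast_nonneg d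
      have : (d:ℝ) * r < 1 := by
        rw [hr, mul_one_div, div_lt_one h2d]
        linarith
      linarith
    · intro i
      have h1 : -((d:ℝ)+1) * r ≤ ((d:ℝ)+1) * x i := by
        have : -r ≤ x i := neg_le_of_abs_le (hxi i).le
        nlinarith [Nat.cast_nonneg (α := ℝ) d]
      have h2d' : (0:ℝ) < 2*(d:ℝ)+2 := by positivity
      have h2 : (2*(d:ℝ)+1) * r ≤ 1 := by
        rw [hr, mul_one_div, div_le_one h2d']
        linarith
      linarith
  exact ⟨0, interior_maximal hball Metric.isOpen_ball (Metric.mem_ball_self hrpos)⟩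

lemma isConvexBody_simplexS {d : ℕ} (hd : 0 < d) : IsConvexBody (simplexS d) :=
  ⟨convex_convexHull ℝ _, isCompact_simplexS d, interior_simplexS_nonempty hd⟩

/-- `S_d` has lattice width 2 w.r.t. `ℤ^d`, realized by the
standard basis directions, and is lattice reduced w.r.t. `ℤ^d`. -/
theorem simplexS_width_and_reduced (d : ℕ) (hd : 0 < d) :
    latticeWidth (simplexS d) (intLattice d) = 2 ∧
    (∀ i : Fin d, IsWidthDirection (simplexS d) (intLattice d)
      (Pi.single i (1 : ℝ))) ∧
    IsLatticeReduced (simplexS d) (intLattice d) := by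
  have hLW := latticeWidth_simplex d hd
  refine ⟨hLW, ?_, ?_⟩
  · intro i
    exact ⟨by rw [dual_intLattice]; exact single_mem_intLattice i, single_ne_zero' i,
      by rw [widthDir_single_simplex hd i, hLW]⟩
  · refine ⟨isConvexBody_simplexS hd, ?_⟩
    intro C' hC' hsub h2
    rw [hLW] at h2
    obtain ⟨hconv, hcomp, hint⟩ := hC'
    have hne : C'.Nonempty := hint.mono interior_subset
    have hCS : C' ⊆ simplexS d := hsub.subset
    have hkey : ∀ i : Fin d, (Pi.single i (1:ℝ) : Fin d → ℝ) ∈ C' ∧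
        (fun _ : Fin d => (-1:ℝ)) ∈ C' := by
      intro i
      have hmem : widthDir C' (Pi.single i (1:ℝ)) ∈
          {w | ∃ y ∈ dualLattice (intLattice d), y ≠ 0 ∧ w = widthDir C' y} :=
        ⟨_, by rw [dual_intLattice]; exact single_mem_intLattice i, single_ne_zero' i, rfl⟩
      have hbddb : BddBelow {w | ∃ y ∈ dualLattice (intLattice d), y ≠ 0 ∧ w = widthDir C' y} := by
        refine ⟨0, ?_⟩
        rintro w ⟨y, hy, hy0, rfl⟩
        exact widthDir_nonneg hne hCS y
      have h2le : (2:ℝ) ≤ widthDir C' (Pi.single i (1:ℝ)) := by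
        rw [← h2]
        exact csInf_le hbddb hmem
      obtain ⟨a, haC, hamax⟩ := hcomp.exists_isMaxOn hne ((continuous_apply i).continuousOn)
      obtain ⟨b, hbC, hbmin⟩ := hcomp.exists_isMinOn hne ((continuous_apply i).continuousOn)
      have hsup_le : widthDir C' (Pi.single i (1:ℝ)) ≤ a i - b i := by
        apply csSup_le (width_set_nonempty hne _)
        rintro r ⟨u, hu, v, hv, rfl⟩
        rw [dot_single]
        have h1 : u i ≤ a i := hamax hu
        have h2' : b i ≤ v i := hbmin hv
        simp only [Pi.sub_apply]
        linarith
      have ha1 : a i ≤ 1 := (simplexS_coord_bounds (hCS haC) i).2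
      have hb1 : -1 ≤ b i := (simplexS_coord_bounds (hCS hbC) i).1
      have hai : a i = 1 := by linarith
      have hbi : b i = -1 := by linarith
      exact ⟨(eq_single_of_coord_one (hCS haC) i hai) ▸ haC,
        (eq_negOne_of_coord_negOne (hCS hbC) i hbi) ▸ hbC⟩
    have hSC : simplexS d ⊆ C' := by
      apply convexHull_min _ hconv
      rintro v (rfl | ⟨i, rfl⟩)
      · exact (hkey ⟨0, hd⟩).2
      · exact (hkey i).1
    exact hsub.not_subset hSC
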